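/- Let n ≥ 2 and let G=(V,E) be the star graph on n vertices with center c ∈ V and n−1 leaves. Define x_e = 1/(n−1) for every edge e ∈ E, and let A be the random subset of V that equals V with probability 1/(n−1) and equals {c} with probability (n−2)/(n−1). Then (i) Pr[v ∈ A] = ∑_{e ∈ δ(v)} x_e for every v ∈ V, (ii) Pr[u ∈ A and v ∈ A] = Pr[u ∈ A] · Pr[v ∈ A] for every edge {u,v} ∈ E, and (iii) the expected maximum matching size of the subgraph of G induced by A equals 1/(n−1), whereas (∑_{e ∈ E} x_e)²/|V| = 1/n. -/

import Mathlib

open scoped Classical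
open Finset

/-- The maximum cardinality of a matching in the subgraph of `G` induced by the vertex
set `S`. -/
noncomputable def inducedMatchingNumber {V : Type} [Fintype V] [DecidableEq V]
    (G : SimpleGraph V) [DecidableRel G.Adj] (S : Finset V) : ℕ :=
  ((G.edgeFinset.filter (fun e => ∀ v ∈ e, v ∈ S)).powerset.filter
      (fun M => ∀ e ∈ M, ∀ f ∈ M, e ≠ f → ∀ v : V, v ∈ e → v ∉ f)).sup Finset.card

/-- The distribution of the random subset `A` of `V`: it equals `V` with probability
`1/(n−1)` and `{c}` with probability `(n−2)/(n−1)`. -/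
noncomputable def starDist {V : Type} [Fintype V] [DecidableEq V] (c : V) (n : ℕ) :
    Finset V → ℝ := fun S =>
  if S = Finset.univ then 1 / ((n : ℝ) - 1)
  else if S = {c} then ((n : ℝ) - 2) / ((n : ℝ) - 1) else 0

section aux
variable {V : Type} [Fintype V] [DecidableEq V]

lemma sum_starDist_mul (c : V) (n : ℕ) (huc : (Finset.univ : Finset V) ≠ {c})
    (T : Finset (Finset V)) (f : Finset V → ℝ) :
    ∑ S ∈ T, starDist c n S * f S
      = (if Finset.univ ∈ T then 1/((n:ℝ)-1) * f Finset.univ else 0)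
        + (if {c} ∈ T then ((n:ℝ)-2)/((n:ℝ)-1) * f {c} else 0) := by
  rw [← Finset.sum_ite_eq' T Finset.univ (fun S => 1/((n:ℝ)-1) * f S),
      ← Finset.sum_ite_eq' T {c} (fun S => ((n:ℝ)-2)/((n:ℝ)-1) * f S),
      ← Finset.sum_add_distrib]
  refine Finset.sum_congr rfl fun S _ => ?_
  unfold starDist
  by_cases h1 : S = Finset.univ
  · subst h1; simp [huc]
  · by_cases h2 : S = {c}
    · subst h2; simp [Ne.symm huc, h1]
    · simp [h1, h2]

lemma edge_mem_iff (c : V) (G : SimpleGraph V) [DecidableRel G.Adj]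
    (hstar : ∀ u v : V, G.Adj u v ↔ ((u = c ∧ v ≠ c) ∨ (v = c ∧ u ≠ c)))
    (e : Sym2 V) : e ∈ G.edgeFinset ↔ ∃ v, v ≠ c ∧ e = s(c, v) := by
  induction e using Sym2.ind with
  | _ a b =>
    rw [SimpleGraph.mem_edgeFinset, SimpleGraph.mem_edgeSet, hstar]
    constructor
    · rintro (⟨rfl, hb⟩ | ⟨rfl, ha⟩)
      · exact ⟨b, hb, Sym2.eq_swap ▸ rfl⟩
      · exact ⟨a, ha, Sym2.eq_swap⟩
    · rintro ⟨v, hv, he⟩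
      rw [Sym2.eq_iff] at he
      rcases he with ⟨rfl, rfl⟩ | ⟨rfl, rfl⟩
      · exact Or.inl ⟨rfl, hv⟩
      · exact Or.inr ⟨rfl, hv⟩

end aux

/-- Let `G` be the star on `n ≥ 2` vertices with center `c`, let
`x_e = 1/(n−1)` on every edge, and let `A` be the random subset of `V` equal to `V` with
probability `1/(n−1)` and to `{c}` with probability `(n−2)/(n−1)`. Then (i) the marginals
of `A` match `x(δ(v))`, (ii) endpoints of every edge are independent, and (iii) the
expected maximum matching size of the subgraph induced by `A` equals `1/(n−1)`, whereas
`x(E)²/|V| = 1/n`. -/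
theorem stmt_15 {V : Type} [Fintype V] [DecidableEq V] (n : ℕ) (hn : 2 ≤ n)
    (hcard : Fintype.card V = n) (c : V)
    (G : SimpleGraph V) [DecidableRel G.Adj]
    (hstar : ∀ u v : V, G.Adj u v ↔ ((u = c ∧ v ≠ c) ∨ (v = c ∧ u ≠ c))) :
    (∀ v : V,
      ∑ S ∈ (Finset.univ : Finset (Finset V)).filter (fun S => v ∈ S), starDist c n S
        = ∑ e ∈ G.edgeFinset.filter (fun e => v ∈ e), (1 / ((n : ℝ) - 1))) ∧
    (∀ u v : V, G.Adj u v →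
      ∑ S ∈ (Finset.univ : Finset (Finset V)).filter (fun S => u ∈ S ∧ v ∈ S),
          starDist c n S
        = (∑ S ∈ (Finset.univ : Finset (Finset V)).filter (fun S => u ∈ S),
            starDist c n S)
          * (∑ S ∈ (Finset.univ : Finset (Finset V)).filter (fun S => v ∈ S),
              starDist c n S)) ∧
    (∑ S : Finset V, starDist c n S * (inducedMatchingNumber G S : ℝ)
      = 1 / ((n : ℝ) - 1)) ∧
    ((∑ e ∈ G.edgeFinset, (1 / ((n : ℝ) - 1))) ^ 2 / (Fintype.card V : ℝ)
      = 1 / (n : ℝ)) := by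
  have hn1 : (1:ℝ) ≤ (n:ℝ) - 1 := by
    have : (2:ℝ) ≤ n := by exact_mod_cast hn
    linarith
  have hne : ((n:ℝ) - 1) ≠ 0 := by linarith
  have huc : (Finset.univ : Finset V) ≠ {c} := by
    intro h
    have := congrArg Finset.card h
    rw [Finset.card_univ, hcard, Finset.card_singleton] at this
    omega
  -- the sum-of-starDist lemma applied with `f = 1`
  have hsum1 : ∀ (T : Finset (Finset V)),
      ∑ S ∈ T, starDist c n S
        = (if Finset.univ ∈ T then 1/((n:ℝ)-1) else 0)
          + (if {c} ∈ T then ((n:ℝ)-2)/((n:ℝ)-1) else 0) := by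
    intro T
    have := sum_starDist_mul c n huc T (fun _ => 1)
    simpa using this
  -- edge set description
  have hedge := edge_mem_iff c G hstar
  have hedgeset : G.edgeFinset
      = (Finset.univ.erase c).image (fun v => s(c, v)) := by
    ext e
    rw [hedge e, Finset.mem_image]
    simp [eq_comm, and_comm]
  have hcardE : G.edgeFinset.card = n - 1 := by
    rw [hedgeset, Finset.card_image_of_injOn, Finset.card_erase_of_mem (Finset.mem_univ c),
      Finset.card_univ, hcard]
    intro a _ b _ hab
    simp only [Sym2.eq_iff] at hab
    rcases hab with ⟨-, h⟩ | ⟨h1, h2⟩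
    · exact h
    · exact h2.trans h1
  have hcastE : (G.edgeFinset.card : ℝ) = (n:ℝ) - 1 := by
    rw [hcardE]; push_cast [Nat.cast_sub (by omega : 1 ≤ n)]; ring
  -- marginal sums
  have hmarg : ∀ v : V,
      ∑ S ∈ (Finset.univ : Finset (Finset V)).filter (fun S => v ∈ S), starDist c n S
        = 1/((n:ℝ)-1) + (if v = c then ((n:ℝ)-2)/((n:ℝ)-1) else 0) := by
    intro v
    rw [hsum1]
    simp [Finset.mem_filter]
  -- c belongs to every edge
  have hcmem : ∀ e ∈ G.edgeFinset, c ∈ e := by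
    intro e he
    obtain ⟨v, hv, rfl⟩ := (hedge e).1 he
    exact Sym2.mem_mk_left c v
  refine ⟨?_, ?_, ?_, ?_⟩
  · -- (i)
    intro v
    rw [hmarg, Finset.sum_const, nsmul_eq_mul]
    by_cases hv : v = c
    · have hfc : G.edgeFinset.filter (fun e => v ∈ e) = G.edgeFinset :=
        Finset.filter_eq_self.2 (fun e he => hv ▸ hcmem e he)
      rw [hfc, hcastE, if_pos hv]
      field_simp
      ring
    · have : G.edgeFinset.filter (fun e => v ∈ e) = {s(c, v)} := by
        ext e
        rw [Finset.mem_filter, hedge e, Finset.mem_singleton]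
        constructor
        · rintro ⟨⟨w, hw, rfl⟩, hve⟩
          simp only [Sym2.mem_iff] at hve
          rcases hve with rfl | rfl
          · exact absurd rfl hv
          · rfl
        · rintro rfl
          exact ⟨⟨v, hv, rfl⟩, Sym2.mem_mk_right c v⟩
      rw [this]
      simp [hv]
  · -- (ii)
    intro u v huv
    rw [hsum1, hmarg, hmarg]
    have huv' := (hstar u v).1 huv
    have hne' : ¬ (u = c ∧ v = c) := by rintro ⟨rfl, rfl⟩; tauto
    rw [if_pos (Finset.mem_filter.2 ⟨Finset.mem_univ _, Finset.mem_univ u, Finset.mem_univ v⟩),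
      if_neg (fun h => hne' ⟨Finset.mem_singleton.1 (Finset.mem_filter.1 h).2.1,
        Finset.mem_singleton.1 (Finset.mem_filter.1 h).2.2⟩)]
    rcases huv' with ⟨hu', hv⟩ | ⟨hv', hu⟩
    · rw [if_pos hu', if_neg hv]; field_simp; ring
    · rw [if_neg hu, if_pos hv']; field_simp; ring
  · -- (iii)
    have hMuniv : inducedMatchingNumber G (Finset.univ : Finset V) = 1 := by
      unfold inducedMatchingNumber
      have hfilt : G.edgeFinset.filter (fun e => ∀ v ∈ e, v ∈ (Finset.univ : Finset V))
          = G.edgeFinset := Finset.filter_eq_self.2 (by intros; simp)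
      rw [hfilt]
      apply le_antisymm
      · apply Finset.sup_le
        intro M hM
        rw [Finset.mem_filter, Finset.mem_powerset] at hM
        obtain ⟨hMsub, hMmatch⟩ := hM
        refine Finset.card_le_one.2 fun e he f hf => ?_
        by_contra hef
        exact hMmatch e he f hf hef c (hcmem e (hMsub he)) (hcmem f (hMsub hf))
      · obtain ⟨v, hv⟩ := Fintype.exists_ne_of_one_lt_card (by omega) c
        have hedge' : s(c, v) ∈ G.edgeFinset := (hedge _).2 ⟨v, hv, rfl⟩
        have : ({s(c,v)} : Finset (Sym2 V)) ∈ (G.edgeFinset.powerset.filter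
            (fun M => ∀ e ∈ M, ∀ f ∈ M, e ≠ f → ∀ w : V, w ∈ e → w ∉ f)) := by
          rw [Finset.mem_filter, Finset.mem_powerset]
          refine ⟨Finset.singleton_subset_iff.2 hedge', ?_⟩
          intro e he f hf hef
          rw [Finset.mem_singleton] at he hf
          exact absurd (he.trans hf.symm) hef
        have := Finset.le_sup (f := Finset.card) this
        simpa using this
    have hMc : inducedMatchingNumber G ({c} : Finset V) = 0 := by
      unfold inducedMatchingNumber
      have hfilt : G.edgeFinset.filter (fun e => ∀ v ∈ e, v ∈ ({c} : Finset V))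
          = ∅ := by
        rw [Finset.filter_eq_empty_iff]
        intro e he
        obtain ⟨v, hv, rfl⟩ := (hedge e).1 he
        intro h
        exact hv (Finset.mem_singleton.1 (h v (Sym2.mem_mk_right c v)))
      rw [hfilt]
      refine Nat.le_zero.1 (Finset.sup_le fun M hM => ?_)
      rw [Finset.mem_filter, Finset.mem_powerset, Finset.subset_empty] at hM
      rw [hM.1]; simp
    rw [sum_starDist_mul c n huc Finset.univ (fun S => (inducedMatchingNumber G S : ℝ))]
    simp [hMuniv, hMc]
  · -- (iv)
    rw [Finset.sum_const, nsmul_eq_mul, hcastE, hcard]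
    have hnne : (n:ℝ) ≠ 0 := by positivity
    field_simp
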